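/- In λS, for all closed t0, t1 with k ∉ FV(t1) and x ∉ FV(t0) implied only where stated: the term (λx.Sk.t0) t1 is not stuck when t1 is not a normal form, whereas Sk.((λx.t0) t1) is stuck; hence (λx.Sk.t0) Ω diverges while Sk.((λx.t0) Ω) is a stuck normal form, so these two terms are not contextually equivalent under the relaxed semantics ≃. -/
import Mathlib


/-- Terms of the calculus λS: variables, abstractions, applications,
    shift (Sk.t) and reset (⟨t⟩). -/
inductive Tm : Type
  | var : ℕ → Tm
  | lam : ℕ → Tm → Tm
  | app : Tm → Tm → Tm
  | shift : ℕ → Tm → Tm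
  | reset : Tm → Tm
deriving DecidableEq

namespace Tm

/-- Values are λ-abstractions. -/
def IsValue : Tm → Prop
  | lam _ _ => True
  | _ => False

/-- Free variables. -/
def fv : Tm → Finset ℕ
  | var x => {x}
  | lam x t => fv t \ {x}
  | app a b => fv a ∪ fv b
  | shift k t => fv t \ {k}
  | reset t => fv t

def Closed (t : Tm) : Prop := fv t = ∅

/-- Substitution t{v/x} (substituted terms are closed values, so no
    capture can occur). -/
def subst : Tm → ℕ → Tm → Tm
  | var y, x, v => if y = x then v else var y
  | lam y t, x, v => if y = x then lam y t else lam y (subst t x v)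
  | app a b, x, v => app (subst a x v) (subst b x v)
  | shift k t, x, v => if k = x then shift k t else shift k (subst t x v)
  | reset t, x, v => reset (subst t x v)

end Tm

/-- (Evaluation) contexts F ::= [] | v F | F t | ⟨F⟩, represented outside-in.
    Pure contexts E are those with no reset constructor. -/
inductive Ctx : Type
  | hole : Ctx
  | appR : Tm → Ctx → Ctx   -- v F
  | appL : Ctx → Tm → Ctx   -- F t
  | reset : Ctx → Ctx       -- ⟨F⟩
deriving DecidableEq

namespace Ctx

def plug : Ctx → Tm → Tm
  | hole, t => t
  | appR v F, t => Tm.app v (F.plug t)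
  | appL F u, t => Tm.app (F.plug t) u
  | reset F, t => Tm.reset (F.plug t)

/-- Well-formedness: in `v F` the term v must be a value. -/
def Wf : Ctx → Prop
  | hole => True
  | appR v F => v.IsValue ∧ F.Wf
  | appL F _ => F.Wf
  | reset F => F.Wf

/-- Pure contexts contain no reset around the hole. -/
def Pure : Ctx → Prop
  | hole => True
  | appR _ F => F.Pure
  | appL F _ => F.Pure
  | reset _ => False

def fv : Ctx → Finset ℕ
  | hole => ∅
  | appR v F => v.fv ∪ F.fv
  | appL F u => F.fv ∪ u.fv
  | reset F => F.fv

/-- Context composition: (F.comp G)[t] = F[G[t]]. -/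
def comp : Ctx → Ctx → Ctx
  | hole, G => G
  | appR v F, G => appR v (F.comp G)
  | appL F u, G => appL (F.comp G) u
  | reset F, G => reset (F.comp G)

end Ctx

/-- A canonical fresh variable not occurring in the finite set s. -/
def fresh (s : Finset ℕ) : ℕ := s.sup id + 1

/-- The reduction relation →v of λS. -/
inductive Red : Tm → Tm → Prop
  | beta (F : Ctx) (x : ℕ) (t v : Tm) :
      F.Wf → v.IsValue →
      Red (F.plug (Tm.app (Tm.lam x t) v)) (F.plug (t.subst x v))
  | shift (F E : Ctx) (k : ℕ) (t : Tm) :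
      F.Wf → E.Wf → E.Pure →
      Red (F.plug (Tm.reset (E.plug (Tm.shift k t))))
          (F.plug (Tm.reset (t.subst k
            (Tm.lam (fresh E.fv) (Tm.reset (E.plug (Tm.var (fresh E.fv))))))))
  | reset (F : Ctx) (v : Tm) :
      F.Wf → v.IsValue →
      Red (F.plug (Tm.reset v)) (F.plug v)

/-- A term is stuck if it is not a value and admits no reduction step. -/
def Stuck (t : Tm) : Prop := ¬ t.IsValue ∧ ∀ t', ¬ Red t t'

/-- A normal form is a value or a stuck term. -/
def NormalForm (t : Tm) : Prop := t.IsValue ∨ Stuck t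

/-- Reflexive-transitive closure of reduction. -/
def Steps : Tm → Tm → Prop := Relation.ReflTransGen Red

/-- Evaluation: t ⇓ t' when t →v* t' and t' is irreducible. -/
def Evals (t t' : Tm) : Prop := Steps t t' ∧ ∀ u, ¬ Red t' u

/-- Redexes: (λx.t) v, ⟨E[Sk.t]⟩ with E pure, and ⟨v⟩. -/
def IsRedex (r : Tm) : Prop :=
  (∃ x t v, Tm.IsValue v ∧ r = Tm.app (Tm.lam x t) v) ∨
  (∃ E : Ctx, ∃ k t, E.Wf ∧ E.Pure ∧ r = Tm.reset (E.plug (Tm.shift k t))) ∨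
  (∃ v, Tm.IsValue v ∧ r = Tm.reset v)

/-- Divergence: an infinite reduction sequence. -/
def Diverges (t : Tm) : Prop := ∃ f : ℕ → Tm, f 0 = t ∧ ∀ n, Red (f n) (f (n + 1))

/-- Ω = (λx.x x)(λx.x x). -/
def Omega : Tm :=
  Tm.app (Tm.lam 0 (Tm.app (Tm.var 0) (Tm.var 0)))
         (Tm.lam 0 (Tm.app (Tm.var 0) (Tm.var 0)))

/-- Arbitrary one-hole contexts C. -/
inductive GCtx : Type
  | hole : GCtx
  | lam : ℕ → GCtx → GCtx
  | appL : GCtx → Tm → GCtx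
  | appR : Tm → GCtx → GCtx
  | shift : ℕ → GCtx → GCtx
  | reset : GCtx → GCtx

def GCtx.plug : GCtx → Tm → Tm
  | hole, t => t
  | lam x C, t => Tm.lam x (C.plug t)
  | appL C u, t => Tm.app (C.plug t) u
  | appR u C, t => Tm.app u (C.plug t)
  | shift k C, t => Tm.shift k (C.plug t)
  | reset C, t => Tm.reset (C.plug t)

/-- Contextual equivalence for the relaxed semantics. -/
def CtxEquiv (t0 t1 : Tm) : Prop :=
  ∀ C : GCtx, (C.plug t0).Closed → (C.plug t1).Closed →
    ((∃ v, v.IsValue ∧ Evals (C.plug t0) v) ↔ (∃ v, v.IsValue ∧ Evals (C.plug t1) v)) ∧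
    ((∃ s, Stuck s ∧ Evals (C.plug t0) s) ↔ (∃ s, Stuck s ∧ Evals (C.plug t1) s))

/-- Contextual equivalence for the original (top-level reset) semantics. -/
def CtxEquivP (t0 t1 : Tm) : Prop :=
  ∀ C : GCtx, (Tm.reset (C.plug t0)).Closed → (Tm.reset (C.plug t1)).Closed →
    ((∃ v, v.IsValue ∧ Evals (Tm.reset (C.plug t0)) v) ↔
     (∃ v, v.IsValue ∧ Evals (Tm.reset (C.plug t1)) v))

/-- The term-generating closure of a relation R on closed terms. -/
inductive TmClo (R : Tm → Tm → Prop) : Tm → Tm → Prop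
  | base {t t'} : R t t' → TmClo R t t'
  | var (x : ℕ) : TmClo R (Tm.var x) (Tm.var x)
  | lam {t t'} (x : ℕ) : TmClo R t t' → TmClo R (Tm.lam x t) (Tm.lam x t')
  | app {a a' b b'} : TmClo R a a' → TmClo R b b' →
      TmClo R (Tm.app a b) (Tm.app a' b')
  | shift {t t'} (k : ℕ) : TmClo R t t' → TmClo R (Tm.shift k t) (Tm.shift k t')
  | reset {t t'} : TmClo R t t' → TmClo R (Tm.reset t) (Tm.reset t')

section Helpers

theorem plug_comp_eq (F G : Ctx) (t : Tm) :
    (F.comp G).plug t = F.plug (G.plug t) := by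
  induction F <;> simp [Ctx.comp, Ctx.plug, *]

theorem wf_comp (F G : Ctx) (hF : F.Wf) (hG : G.Wf) : (F.comp G).Wf := by
  induction F <;> simp_all [Ctx.comp, Ctx.Wf]

theorem red_ctx {t t' : Tm} (F : Ctx) (hF : F.Wf) (h : Red t t') :
    Red (F.plug t) (F.plug t') := by
  cases h with
  | beta G x t v hG hv =>
      rw [← plug_comp_eq, ← plug_comp_eq]
      exact Red.beta _ _ _ _ (wf_comp _ _ hF hG) hv
  | shift G E kk tt hG hE hP =>
      rw [← plug_comp_eq, ← plug_comp_eq]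
      exact Red.shift _ _ _ _ (wf_comp _ _ hF hG) hE hP
  | reset G v hG hv =>
      rw [← plug_comp_eq, ← plug_comp_eq]
      exact Red.reset _ _ (wf_comp _ _ hF hG) hv

theorem plug_eq_lam {F : Ctx} {r : Tm} {y : ℕ} {s : Tm}
    (h : F.plug r = Tm.lam y s) : F = Ctx.hole ∧ r = Tm.lam y s := by
  cases F <;> simp_all [Ctx.plug]

theorem plug_eq_shift {F : Ctx} {r : Tm} {kk : ℕ} {u : Tm}
    (h : F.plug r = Tm.shift kk u) : F = Ctx.hole ∧ r = Tm.shift kk u := by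
  cases F <;> simp_all [Ctx.plug]

theorem shift_no_red {kk : ℕ} {u t' : Tm} (h : Red (Tm.shift kk u) t') : False := by
  generalize ha : Tm.shift kk u = a at h
  cases h with
  | beta F x t v hF hv => obtain ⟨_, hr⟩ := plug_eq_shift ha.symm; simp at hr
  | shift F E k2 t2 hF hE hP => obtain ⟨_, hr⟩ := plug_eq_shift ha.symm; simp at hr
  | reset F v hF hv => obtain ⟨_, hr⟩ := plug_eq_shift ha.symm; simp at hr

theorem shift_stuck (kk : ℕ) (u : Tm) : Stuck (Tm.shift kk u) :=
  ⟨by simp [Tm.IsValue], fun _ h => shift_no_red h⟩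

theorem red_omega : Red Omega Omega := by
  have h := Red.beta Ctx.hole 0 (Tm.app (Tm.var 0) (Tm.var 0))
      (Tm.lam 0 (Tm.app (Tm.var 0) (Tm.var 0))) trivial trivial
  simpa [Omega, Ctx.plug, Tm.subst] using h

theorem lhs_red_inv {t0 : Tm} {x k : ℕ} {a u : Tm} (h : Red a u)
    (ha : a = Tm.app (Tm.lam x (Tm.shift k t0)) Omega) :
    u = Tm.app (Tm.lam x (Tm.shift k t0)) Omega := by
  cases h with
  | beta F x' t v hF hv =>
      rcases F with _ | ⟨v0, F⟩ | ⟨F, u1⟩ | F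
      · simp [Ctx.plug] at ha
        obtain ⟨⟨hx, ht⟩, hv2⟩ := ha
        subst hv2
        simp [Omega, Tm.IsValue] at hv
      · simp [Ctx.plug] at ha
        obtain ⟨hv0, hrest⟩ := ha
        rcases F with _ | ⟨v1, F⟩ | ⟨F, u1⟩ | F
        · simp [Ctx.plug, Omega] at hrest
          obtain ⟨⟨hx, ht⟩, hv2⟩ := hrest
          subst hx; subst ht; subst hv2; subst hv0
          simp [Ctx.plug, Tm.subst, Omega]
        · simp [Ctx.plug, Omega] at hrest
          obtain ⟨hv1, hrest⟩ := hrest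
          obtain ⟨_, hr⟩ := plug_eq_lam hrest
          simp at hr
        · simp [Ctx.plug, Omega] at hrest
          obtain ⟨hrest, _⟩ := hrest
          obtain ⟨_, hr⟩ := plug_eq_lam hrest
          simp at hr
        · simp [Ctx.plug, Omega] at hrest
      · simp [Ctx.plug] at ha
        obtain ⟨hrest, _⟩ := ha
        obtain ⟨_, hr⟩ := plug_eq_lam hrest
        simp at hr
      · simp [Ctx.plug] at ha
  | shift F E k2 t2 hF hE hP =>
      rcases F with _ | ⟨v0, F⟩ | ⟨F, u1⟩ | F
      · simp [Ctx.plug] at ha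
      · simp [Ctx.plug] at ha
        obtain ⟨hv0, hrest⟩ := ha
        rcases F with _ | ⟨v1, F⟩ | ⟨F, u1⟩ | F
        · simp [Ctx.plug, Omega] at hrest
        · simp [Ctx.plug, Omega] at hrest
          obtain ⟨hv1, hrest⟩ := hrest
          obtain ⟨_, hr⟩ := plug_eq_lam hrest
          simp at hr
        · simp [Ctx.plug, Omega] at hrest
          obtain ⟨hrest, _⟩ := hrest
          obtain ⟨_, hr⟩ := plug_eq_lam hrest
          simp at hr
        · simp [Ctx.plug, Omega] at hrest
      · simp [Ctx.plug] at ha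
        obtain ⟨hrest, _⟩ := ha
        obtain ⟨_, hr⟩ := plug_eq_lam hrest
        simp at hr
      · simp [Ctx.plug] at ha
  | reset F v hF hv =>
      rcases F with _ | ⟨v0, F⟩ | ⟨F, u1⟩ | F
      · simp [Ctx.plug] at ha
      · simp [Ctx.plug] at ha
        obtain ⟨hv0, hrest⟩ := ha
        rcases F with _ | ⟨v1, F⟩ | ⟨F, u1⟩ | F
        · simp [Ctx.plug, Omega] at hrest
        · simp [Ctx.plug, Omega] at hrest
          obtain ⟨hv1, hrest⟩ := hrest
          obtain ⟨_, hr⟩ := plug_eq_lam hrest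
          simp at hr
        · simp [Ctx.plug, Omega] at hrest
          obtain ⟨hrest, _⟩ := hrest
          obtain ⟨_, hr⟩ := plug_eq_lam hrest
          simp at hr
        · simp [Ctx.plug, Omega] at hrest
      · simp [Ctx.plug] at ha
        obtain ⟨hrest, _⟩ := ha
        obtain ⟨_, hr⟩ := plug_eq_lam hrest
        simp at hr
      · simp [Ctx.plug] at ha

end Helpers

/-- (λx.Sk.t0) t1 is not stuck when t1 is not a normal form,
    whereas Sk.((λx.t0) t1) is stuck; hence (λx.Sk.t0) Ω diverges while
    Sk.((λx.t0) Ω) is a stuck normal form, and the two terms are not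
    related by the relaxed contextual equivalence. -/
theorem s_tail_not_relaxed (t0 t1 : Tm) (x k : ℕ)
    (h0 : (Tm.lam x (Tm.shift k t0)).Closed) (h1 : t1.Closed)
    (hk : k ∉ t1.fv) :
    (¬ NormalForm t1 → ¬ Stuck (Tm.app (Tm.lam x (Tm.shift k t0)) t1)) ∧
    Stuck (Tm.shift k (Tm.app (Tm.lam x t0) t1)) ∧
    Diverges (Tm.app (Tm.lam x (Tm.shift k t0)) Omega) ∧
    Stuck (Tm.shift k (Tm.app (Tm.lam x t0) Omega)) ∧
    NormalForm (Tm.shift k (Tm.app (Tm.lam x t0) Omega)) ∧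
    ¬ CtxEquiv (Tm.app (Tm.lam x (Tm.shift k t0)) Omega)
               (Tm.shift k (Tm.app (Tm.lam x t0) Omega)) := by
    classical
  set L := Tm.lam x (Tm.shift k t0) with hL
  have hLv : L.IsValue := by simp [hL, Tm.IsValue]
  have redL : Red (Tm.app L Omega) (Tm.app L Omega) := by
    have := red_ctx (Ctx.appR L Ctx.hole) ⟨hLv, trivial⟩ red_omega
    simpa [Ctx.plug] using this
  have hfix : ∀ s, Steps (Tm.app L Omega) s → s = Tm.app L Omega := by
    intro s hs
    induction hs with
    | refl => rfl
    | tail hst hr ih =>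
        subst ih
        exact lhs_red_inv hr rfl
  have hnoEval : ∀ s, ¬ Evals (Tm.app L Omega) s := by
    rintro s ⟨hsteps, hirr⟩
    have := hfix s hsteps
    subst this
    exact hirr _ redL
  refine ⟨?_, shift_stuck _ _, ?_, shift_stuck _ _, Or.inr (shift_stuck _ _), ?_⟩
  · intro hnf hstuck
    have hnv : ¬ t1.IsValue := fun h => hnf (Or.inl h)
    have hns : ¬ Stuck t1 := fun h => hnf (Or.inr h)
    simp only [Stuck, not_and, not_forall, not_not] at hns
    obtain ⟨t1', hred⟩ := hns hnv
    have := red_ctx (Ctx.appR L Ctx.hole) ⟨hLv, trivial⟩ hred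
    simp [Ctx.plug] at this
    exact hstuck.2 _ this
  · exact ⟨fun _ => Tm.app L Omega, rfl, fun _ => redL⟩
  · intro hCE
    have h0' : (Tm.fv t0 \ ({k} : Finset ℕ)) \ ({x} : Finset ℕ) = ∅ := by
      simpa [Tm.Closed, Tm.fv, hL] using h0
    have clO : Omega.fv = ∅ := by simp [Omega, Tm.fv]
    have cl0 : (GCtx.plug GCtx.hole (Tm.app L Omega)).Closed := by
      show L.fv ∪ Omega.fv = ∅
      have hLfv : L.fv = ∅ := h0
      rw [hLfv, clO]; simp
    have cl1 : (GCtx.plug GCtx.hole (Tm.shift k (Tm.app (Tm.lam x t0) Omega))).Closed := by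
      have hcomm : (Tm.fv t0 \ ({x} : Finset ℕ)) \ ({k} : Finset ℕ) = ∅ := by
        ext a
        have := Finset.ext_iff.mp h0' a
        simp at this ⊢
        tauto
      show (Tm.shift k (Tm.app (Tm.lam x t0) Omega)).fv = ∅
      simp [Tm.fv, clO, hcomm]
    obtain ⟨-, hiff⟩ := hCE GCtx.hole cl0 cl1
    have hrhs : ∃ s, Stuck s ∧ Evals (GCtx.plug GCtx.hole (Tm.shift k (Tm.app (Tm.lam x t0) Omega))) s :=
      ⟨Tm.shift k (Tm.app (Tm.lam x t0) Omega), shift_stuck _ _,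
        Relation.ReflTransGen.refl, (shift_stuck _ _).2⟩
    obtain ⟨s, -, hev⟩ := hiff.mpr hrhs
    exact hnoEval s hev
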